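/- For all r, R ∈ (0, H(X)): PF(r)/r ≤ I(X;Y)/H(X) ≤ IB(R)/R. -/

import Mathlib

open Real BigOperators

namespace BN

variable {α β γ : Type*}

section Finite
variable [Fintype α] [Fintype β] [Fintype γ]

/-- `q` is a probability mass function on a finite alphabet. -/
def IsPMF (q : α → ℝ) : Prop := (∀ a, 0 ≤ q a) ∧ (∑ a, q a) = 1

/-- `p` is a joint probability mass function. -/
def IsJointPMF (p : α → β → ℝ) : Prop :=
  (∀ a b, 0 ≤ p a b) ∧ (∑ a, ∑ b, p a b) = 1

/-- `k` is a channel (conditional distribution) from `α` to `γ`. -/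
def IsChannel (k : α → γ → ℝ) : Prop :=
  (∀ a c, 0 ≤ k a c) ∧ ∀ a, (∑ c, k a c) = 1

/-- first marginal of a joint pmf -/
def fstM (p : α → β → ℝ) (a : α) : ℝ := ∑ b, p a b

/-- second marginal of a joint pmf -/
def sndM (p : α → β → ℝ) (b : β) : ℝ := ∑ a, p a b

/-- Shannon mutual information (in nats) of a joint pmf. -/
noncomputable def mi (p : α → β → ℝ) : ℝ :=
  ∑ a, ∑ b, p a b * Real.log (p a b / (fstM p a * sndM p b))

/-- Shannon entropy (in nats). -/
noncomputable def ent (q : α → ℝ) : ℝ := -∑ a, q a * Real.log (q a)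

/-- conditional entropy H(X|Y) of the first coordinate given the second. -/
noncomputable def condEnt (p : α → β → ℝ) : ℝ :=
  -∑ a, ∑ b, p a b * Real.log (p a b / sndM p b)

/-- Joint pmf of (X,T) when T is generated from X via channel `k`,
so Y ⊸ X ⊸ T is a Markov chain. -/
noncomputable def jXT (p : α → β → ℝ) (k : α → γ → ℝ) : α → γ → ℝ :=
  fun a c => fstM p a * k a c

/-- Joint pmf of (Y,T) under the Markov chain Y ⊸ X ⊸ T. -/
noncomputable def jYT (p : α → β → ℝ) (k : α → γ → ℝ) : β → γ → ℝ :=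
  fun b c => ∑ a, p a b * k a c

/-- I(X;T) under the Markov chain Y ⊸ X ⊸ T. -/
noncomputable def miXT (p : α → β → ℝ) (k : α → γ → ℝ) : ℝ := mi (jXT p k)

/-- I(Y;T) under the Markov chain Y ⊸ X ⊸ T. -/
noncomputable def miYT (p : α → β → ℝ) (k : α → γ → ℝ) : ℝ := mi (jYT p k)

/-- The information bottleneck function. -/
noncomputable def IB (p : α → β → ℝ) (R : ℝ) : ℝ :=
  sSup {v | ∃ (n : ℕ) (k : α → Fin n → ℝ),
    IsChannel k ∧ miXT p k ≤ R ∧ v = miYT p k}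

/-- The privacy funnel function. -/
noncomputable def PF (p : α → β → ℝ) (r : ℝ) : ℝ :=
  sInf {v | ∃ (n : ℕ) (k : α → Fin n → ℝ),
    IsChannel k ∧ r ≤ miXT p k ∧ v = miYT p k}

end Finite

end BN

namespace BN
section Aux
set_option linter.unusedSectionVars false

variable {α β : Type*} [Fintype α] [Fintype β]

lemma mul_log_self_div (x : ℝ) : x * Real.log (x / x) = 0 := by
  rcases eq_or_ne x 0 with h | h
  · simp [h]
  · simp [div_self h]

lemma fstM_nonneg {q : α → β → ℝ} (hq : ∀ a b, 0 ≤ q a b) (a : α) : 0 ≤ fstM q a :=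
  Finset.sum_nonneg fun b _ => hq a b

lemma sndM_nonneg {q : α → β → ℝ} (hq : ∀ a b, 0 ≤ q a b) (b : β) : 0 ≤ sndM q b :=
  Finset.sum_nonneg fun a _ => hq a b

lemma le_fstM {q : α → β → ℝ} (hq : ∀ a b, 0 ≤ q a b) (a : α) (b : β) : q a b ≤ fstM q a :=
  Finset.single_le_sum (fun b _ => hq a b) (Finset.mem_univ b)

lemma le_sndM {q : α → β → ℝ} (hq : ∀ a b, 0 ≤ q a b) (a : α) (b : β) : q a b ≤ sndM q b :=
  Finset.single_le_sum (fun a _ => hq a b) (Finset.mem_univ a)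

lemma sum_fstM {q : α → β → ℝ} (hq : IsJointPMF q) : ∑ a, fstM q a = 1 := hq.2

lemma sum_sndM {q : α → β → ℝ} (hq : IsJointPMF q) : ∑ b, sndM q b = 1 := by
  unfold sndM; rw [Finset.sum_comm]; exact hq.2

lemma mi_nonneg (q : α → β → ℝ) (hq : IsJointPMF q) : 0 ≤ mi q := by
  have hterm : ∀ a b, q a b - fstM q a * sndM q b
      ≤ q a b * Real.log (q a b / (fstM q a * sndM q b)) := by
    intro a b
    rcases eq_or_lt_of_le (hq.1 a b) with h | h
    · have := mul_nonneg (fstM_nonneg hq.1 a) (sndM_nonneg hq.1 b)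
      simp [← h]; linarith
    · have hfa : 0 < fstM q a := lt_of_lt_of_le h (le_fstM hq.1 a b)
      have hsb : 0 < sndM q b := lt_of_lt_of_le h (le_sndM hq.1 a b)
      have hm : 0 < fstM q a * sndM q b := mul_pos hfa hsb
      have h1 : Real.log ((fstM q a * sndM q b) / q a b) ≤ (fstM q a * sndM q b) / q a b - 1 :=
        Real.log_le_sub_one_of_pos (div_pos hm h)
      have h2 : Real.log (q a b / (fstM q a * sndM q b))
          = -Real.log ((fstM q a * sndM q b) / q a b) := by
        rw [Real.log_div (ne_of_gt h) (ne_of_gt hm), Real.log_div (ne_of_gt hm) (ne_of_gt h)]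
        ring
      have h3 : 1 - (fstM q a * sndM q b) / q a b
          ≤ Real.log (q a b / (fstM q a * sndM q b)) := by rw [h2]; linarith
      have h4 := mul_le_mul_of_nonneg_left h3 h.le
      have h5 : q a b * (1 - (fstM q a * sndM q b) / q a b) = q a b - fstM q a * sndM q b := by
        field_simp
      linarith
  have hsum : ∑ a, ∑ b, (q a b - fstM q a * sndM q b) = 0 := by
    have h2 : ∑ b, sndM q b = 1 := sum_sndM hq
    have : ∀ a, ∑ b, (q a b - fstM q a * sndM q b) = fstM q a - fstM q a := by
      intro a
      rw [Finset.sum_sub_distrib, ← Finset.mul_sum, h2, mul_one]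
      rfl
    simp [this]
  have := Finset.sum_le_sum (fun a (_ : a ∈ Finset.univ) =>
    Finset.sum_le_sum (fun b (_ : b ∈ Finset.univ) => hterm a b))
  unfold mi
  linarith [hsum ▸ this]

lemma mi_le_ent_fst (q : α → β → ℝ) (hq : IsJointPMF q) : mi q ≤ ent (fstM q) := by
  have hterm : ∀ a b, q a b * Real.log (q a b / (fstM q a * sndM q b))
      ≤ q a b * (-Real.log (fstM q a)) := by
    intro a b
    rcases eq_or_lt_of_le (hq.1 a b) with h | h
    · simp [← h]
    · have hfa : 0 < fstM q a := lt_of_lt_of_le h (le_fstM hq.1 a b)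
      have hsb : 0 < sndM q b := lt_of_lt_of_le h (le_sndM hq.1 a b)
      have hratio : q a b / (fstM q a * sndM q b) ≤ 1 / fstM q a := by
        rw [div_le_div_iff₀ (by positivity) hfa]
        calc q a b * fstM q a ≤ sndM q b * fstM q a :=
              mul_le_mul_of_nonneg_right (le_sndM hq.1 a b) hfa.le
          _ = 1 * (fstM q a * sndM q b) := by ring
      have hlog := Real.log_le_log (by positivity) hratio
      rw [Real.log_div one_ne_zero (ne_of_gt hfa), Real.log_one] at hlog
      exact mul_le_mul_of_nonneg_left (by linarith) h.le
  have h1 : mi q ≤ ∑ a, ∑ b, q a b * (-Real.log (fstM q a)) :=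
    Finset.sum_le_sum fun a _ => Finset.sum_le_sum fun b _ => hterm a b
  have h2 : ∑ a, ∑ b, q a b * (-Real.log (fstM q a)) = ent (fstM q) := by
    unfold ent
    rw [← Finset.sum_neg_distrib]
    refine Finset.sum_congr rfl fun a _ => ?_
    rw [← Finset.sum_mul]
    show fstM q a * (-Real.log (fstM q a)) = -(fstM q a * Real.log (fstM q a))
    ring
  linarith [h2 ▸ h1]

lemma jYT_isJointPMF {n : ℕ} (p : α → β → ℝ) (hp : IsJointPMF p)
    (k : α → Fin n → ℝ) (hk : IsChannel k) : IsJointPMF (jYT p k) := by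
  constructor
  · intro b c
    exact Finset.sum_nonneg fun a _ => mul_nonneg (hp.1 a b) (hk.1 a c)
  · unfold jYT
    calc ∑ b, ∑ c, ∑ a, p a b * k a c
        = ∑ b, ∑ a, ∑ c, p a b * k a c := by
          refine Finset.sum_congr rfl fun b _ => Finset.sum_comm
      _ = ∑ b, ∑ a, p a b := by
          refine Finset.sum_congr rfl fun b _ => Finset.sum_congr rfl fun a _ => ?_
          rw [← Finset.mul_sum, hk.2 a, mul_one]
      _ = 1 := by rw [Finset.sum_comm]; exact hp.2

lemma fstM_jYT {n : ℕ} (p : α → β → ℝ) (k : α → Fin n → ℝ) (hk : IsChannel k) :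
    fstM (jYT p k) = sndM p := by
  funext b
  unfold fstM jYT sndM
  rw [Finset.sum_comm]
  refine Finset.sum_congr rfl fun a _ => ?_
  rw [← Finset.mul_sum, hk.2 a, mul_one]

noncomputable def er (α : Type*) [Fintype α] (l : ℝ) :
    α → Fin (Fintype.card α + 1) → ℝ :=
  fun a c => if c = Fin.castSucc (Fintype.equivFin α a) then l
    else if c = Fin.last _ then 1 - l else 0

lemma er_isChannel {l : ℝ} (h0 : 0 ≤ l) (h1 : l ≤ 1) : IsChannel (er α l) := by
  constructor
  · intro a c
    unfold er
    split_ifs <;> linarith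
  · intro a
    unfold er
    rw [Fin.sum_univ_castSucc]
    have hne : ∀ j : Fin (Fintype.card α), (Fin.castSucc j = Fin.last _ ) = False :=
      fun j => eq_false (Fin.castSucc_lt_last j).ne
    simp only [Fin.castSucc_inj, hne, if_false]
    rw [Finset.sum_ite_eq' Finset.univ (Fintype.equivFin α a) (fun _ => l)]
    have : ¬ (Fin.last (Fintype.card α) = Fin.castSucc (Fintype.equivFin α a)) :=
      (Fin.castSucc_lt_last _).ne'
    simp [this]
lemma sndM_jXT_er_cast (p : α → β → ℝ) {l : ℝ} (j : Fin (Fintype.card α)) :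
    sndM (jXT p (er α l)) (Fin.castSucc j)
      = fstM p ((Fintype.equivFin α).symm j) * l := by
  unfold sndM jXT er
  rw [Finset.sum_eq_single ((Fintype.equivFin α).symm j)]
  · simp
  · intro a _ hne
    have h1 : ¬ (Fin.castSucc j = Fin.castSucc (Fintype.equivFin α a)) := by
      simp only [Fin.castSucc_inj]
      intro h
      exact hne (by rw [h, Equiv.symm_apply_apply])
    have h2 : ¬ (Fin.castSucc j = Fin.last (Fintype.card α)) :=
      (Fin.castSucc_lt_last j).ne
    simp [h1, h2]
  · simp

lemma sndM_jXT_er_last (p : α → β → ℝ) (hp : IsJointPMF p) {l : ℝ} :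
    sndM (jXT p (er α l)) (Fin.last _) = 1 - l := by
  unfold sndM jXT er
  have hne : ∀ a : α, ¬ (Fin.last (Fintype.card α) = Fin.castSucc (Fintype.equivFin α a)) :=
    fun a => (Fin.castSucc_lt_last _).ne'
  simp only [hne, if_false, if_pos rfl, if_true]
  rw [← Finset.sum_mul, sum_fstM hp, one_mul]

lemma fstM_jXT (p : α → β → ℝ) {n : ℕ} (k : α → Fin n → ℝ) (hk : IsChannel k) :
    fstM (jXT p k) = fstM p := by
  funext a
  unfold fstM jXT
  rw [← Finset.mul_sum, hk.2 a, mul_one]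
  rfl

lemma miXT_er (p : α → β → ℝ) (hp : IsJointPMF p) {l : ℝ} (h0 : 0 < l) (h1 : l ≤ 1) :
    miXT p (er α l) = l * ent (fstM p) := by
  have hch : IsChannel (er α l) := er_isChannel h0.le h1
  have hterm : ∀ a, ∑ c, jXT p (er α l) a c *
      Real.log (jXT p (er α l) a c / (fstM (jXT p (er α l)) a * sndM (jXT p (er α l)) c))
      = -(l * (fstM p a * Real.log (fstM p a))) := by
    intro a
    rw [Fin.sum_univ_castSucc]
    have hlast : jXT p (er α l) a (Fin.last _) *
        Real.log (jXT p (er α l) a (Fin.last _) /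
          (fstM (jXT p (er α l)) a * sndM (jXT p (er α l)) (Fin.last _))) = 0 := by
      rw [fstM_jXT p _ hch, sndM_jXT_er_last p hp]
      have hj : jXT p (er α l) a (Fin.last _) = fstM p a * (1 - l) := by
        unfold jXT er
        have : ¬ (Fin.last (Fintype.card α) = Fin.castSucc (Fintype.equivFin α a)) :=
          (Fin.castSucc_lt_last _).ne'
        simp [this]
      rw [hj]
      exact mul_log_self_div _
    rw [hlast, add_zero]
    rw [Finset.sum_eq_single (Fintype.equivFin α a)]
    · rw [fstM_jXT p _ hch, sndM_jXT_er_cast p, Equiv.symm_apply_apply]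
      have hj : jXT p (er α l) a (Fin.castSucc (Fintype.equivFin α a)) = fstM p a * l := by
        unfold jXT er; simp
      rw [hj]
      rcases eq_or_lt_of_le (fstM_nonneg hp.1 a) with h | h
      · simp [← h]
      · have harg : fstM p a * l / (fstM p a * (fstM p a * l)) = 1 / fstM p a := by
          field_simp
        rw [harg, Real.log_div one_ne_zero (ne_of_gt h), Real.log_one]
        ring
    · intro j _ hne
      have hj : jXT p (er α l) a (Fin.castSucc j) = 0 := by
        unfold jXT er
        have h1' : ¬ (Fin.castSucc j = Fin.castSucc (Fintype.equivFin α a)) := by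
          simp only [Fin.castSucc_inj]; exact hne
        have h2' : ¬ (Fin.castSucc j = Fin.last (Fintype.card α)) :=
          (Fin.castSucc_lt_last j).ne
        simp [h1', h2']
      rw [hj]; simp
    · simp
  unfold miXT mi
  rw [Finset.sum_congr rfl fun a _ => hterm a]
  unfold ent
  rw [← Finset.sum_neg_distrib, Finset.mul_sum]
  exact Finset.sum_congr rfl fun a _ => by ring

lemma sndM_jYT (p : α → β → ℝ) {n : ℕ} (k : α → Fin n → ℝ) :
    sndM (jYT p k) = sndM (jXT p k) := by
  funext c
  unfold sndM jYT jXT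
  rw [Finset.sum_comm]
  refine Finset.sum_congr rfl fun a _ => ?_
  rw [← Finset.sum_mul]
  rfl

lemma miYT_er (p : α → β → ℝ) (hp : IsJointPMF p) {l : ℝ} (h0 : 0 < l) (h1 : l ≤ 1) :
    miYT p (er α l) = l * mi p := by
  have hch : IsChannel (er α l) := er_isChannel h0.le h1
  have hjcast : ∀ (b : β) (j : Fin (Fintype.card α)),
      jYT p (er α l) b (Fin.castSucc j) = p ((Fintype.equivFin α).symm j) b * l := by
    intro b j
    unfold jYT er
    rw [Finset.sum_eq_single ((Fintype.equivFin α).symm j)]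
    · simp
    · intro a _ hne
      have h1' : ¬ (Fin.castSucc j = Fin.castSucc (Fintype.equivFin α a)) := by
        simp only [Fin.castSucc_inj]
        intro h; exact hne (by rw [h, Equiv.symm_apply_apply])
      have h2' := (Fin.castSucc_lt_last j).ne
      simp [h1', h2']
    · simp
  have hjlast : ∀ b, jYT p (er α l) b (Fin.last _) = sndM p b * (1 - l) := by
    intro b
    unfold jYT er
    have hne : ∀ a : α, ¬ (Fin.last (Fintype.card α) = Fin.castSucc (Fintype.equivFin α a)) :=
      fun a => (Fin.castSucc_lt_last _).ne'
    simp only [hne, if_false, if_pos rfl, if_true]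
    rw [← Finset.sum_mul]
    rfl
  have hfst : fstM (jYT p (er α l)) = sndM p := fstM_jYT p _ hch
  have hsnd : sndM (jYT p (er α l)) = sndM (jXT p (er α l)) := sndM_jYT p _
  have hterm : ∀ b, (∑ c, jYT p (er α l) b c *
      Real.log (jYT p (er α l) b c / (fstM (jYT p (er α l)) b * sndM (jYT p (er α l)) c)))
      = ∑ j : Fin (Fintype.card α), l * (p ((Fintype.equivFin α).symm j) b *
          Real.log (p ((Fintype.equivFin α).symm j) b /
            (fstM p ((Fintype.equivFin α).symm j) * sndM p b))) := by
    intro b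
    rw [Fin.sum_univ_castSucc]
    have hlast0 : jYT p (er α l) b (Fin.last _) * Real.log (jYT p (er α l) b (Fin.last _) /
        (fstM (jYT p (er α l)) b * sndM (jYT p (er α l)) (Fin.last _))) = 0 := by
      rw [hjlast, hfst, hsnd, sndM_jXT_er_last p hp]
      exact mul_log_self_div _
    rw [hlast0, add_zero]
    refine Finset.sum_congr rfl fun j _ => ?_
    rw [hjcast, hfst, hsnd, sndM_jXT_er_cast p]
    set a := (Fintype.equivFin α).symm j with ha
    rcases eq_or_lt_of_le (hp.1 a b) with h | h
    · simp [← h]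
    · have hfa : 0 < fstM p a := lt_of_lt_of_le h (le_fstM hp.1 a b)
      have hsb : 0 < sndM p b := lt_of_lt_of_le h (le_sndM hp.1 a b)
      have harg : p a b * l / (sndM p b * (fstM p a * l)) = p a b / (fstM p a * sndM p b) := by
        field_simp
      rw [harg]
      ring
  unfold miYT mi
  rw [Finset.sum_congr rfl fun b _ => hterm b]
  have h1 : ∀ b : β, (∑ j : Fin (Fintype.card α), l * (p ((Fintype.equivFin α).symm j) b *
      Real.log (p ((Fintype.equivFin α).symm j) b /
        (fstM p ((Fintype.equivFin α).symm j) * sndM p b))))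
      = ∑ a, l * (p a b * Real.log (p a b / (fstM p a * sndM p b))) := fun b =>
    Equiv.sum_comp ((Fintype.equivFin α).symm)
      (fun a => l * (p a b * Real.log (p a b / (fstM p a * sndM p b))))
  rw [Finset.sum_congr rfl fun b _ => h1 b, Finset.sum_comm]
  rw [Finset.mul_sum]
  exact Finset.sum_congr rfl fun a _ => by rw [← Finset.mul_sum]

end Aux
end BN

namespace BN
/-- for `r, R ∈ (0, H(X))`, `PF(r)/r ≤ I(X;Y)/H(X) ≤ IB(R)/R`. -/
theorem PF_IB_linear_bounds {α β : Type*} [Fintype α] [Fintype β]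
    (p : α → β → ℝ) (hp : IsJointPMF p)
    (r R : ℝ) (hr : r ∈ Set.Ioo 0 (ent (fstM p))) (hR : R ∈ Set.Ioo 0 (ent (fstM p))) :
    PF p r / r ≤ mi p / ent (fstM p) ∧ mi p / ent (fstM p) ≤ IB p R / R := by
  obtain ⟨hr0, hrH⟩ := hr
  obtain ⟨hR0, hRH⟩ := hR
  have hH : 0 < ent (fstM p) := lt_trans hr0 hrH
  have hHne : ent (fstM p) ≠ 0 := ne_of_gt hH
  -- bounds on the sets
  have hbddA : BddAbove {v | ∃ (n : ℕ) (k : α → Fin n → ℝ),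
      IsChannel k ∧ miXT p k ≤ R ∧ v = miYT p k} := by
    refine ⟨ent (sndM p), ?_⟩
    rintro v ⟨n, k, hk, -, rfl⟩
    have h1 := mi_le_ent_fst (jYT p k) (jYT_isJointPMF p hp k hk)
    rwa [fstM_jYT p k hk] at h1
  have hbddB : BddBelow {v | ∃ (n : ℕ) (k : α → Fin n → ℝ),
      IsChannel k ∧ r ≤ miXT p k ∧ v = miYT p k} := by
    refine ⟨0, ?_⟩
    rintro v ⟨n, k, hk, -, rfl⟩
    exact mi_nonneg (jYT p k) (jYT_isJointPMF p hp k hk)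
  constructor
  · -- PF side
    set l := r / ent (fstM p) with hl
    have hl0 : 0 < l := div_pos hr0 hH
    have hl1 : l ≤ 1 := (div_le_one hH).2 hrH.le
    have hmem : l * mi p ∈ {v | ∃ (n : ℕ) (k : α → Fin n → ℝ),
        IsChannel k ∧ r ≤ miXT p k ∧ v = miYT p k} := by
      refine ⟨Fintype.card α + 1, er α l, er_isChannel hl0.le hl1, ?_, ?_⟩
      · rw [miXT_er p hp hl0 hl1, hl, div_mul_cancel₀ _ hHne]
      · rw [miYT_er p hp hl0 hl1]
    have hPF : PF p r ≤ l * mi p := csInf_le hbddB hmem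
    rw [div_le_div_iff₀ hr0 hH]
    calc PF p r * ent (fstM p) ≤ l * mi p * ent (fstM p) :=
          mul_le_mul_of_nonneg_right hPF hH.le
      _ = mi p * r := by rw [hl]; field_simp
  · -- IB side
    set l := R / ent (fstM p) with hl
    have hl0 : 0 < l := div_pos hR0 hH
    have hl1 : l ≤ 1 := (div_le_one hH).2 hRH.le
    have hmem : l * mi p ∈ {v | ∃ (n : ℕ) (k : α → Fin n → ℝ),
        IsChannel k ∧ miXT p k ≤ R ∧ v = miYT p k} := by
      refine ⟨Fintype.card α + 1, er α l, er_isChannel hl0.le hl1, ?_, ?_⟩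
      · rw [miXT_er p hp hl0 hl1, hl, div_mul_cancel₀ _ hHne]
      · rw [miYT_er p hp hl0 hl1]
    have hIB : l * mi p ≤ IB p R := le_csSup hbddA hmem
    rw [div_le_div_iff₀ hH hR0]
    calc mi p * R = l * mi p * ent (fstM p) := by rw [hl]; field_simp
      _ ≤ IB p R * ent (fstM p) := mul_le_mul_of_nonneg_right hIB hH.le
end BN
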